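/- Let δ > 0 be a real number. For n ≥ 1 define C_n = (δ+3)/(6(δ+4)^n + 3δ + 3) · ( Σ_{i=1}^{n} 6(δ+4)^{i-1}(δ+1)/(2(δ+2)^{n-i} + δ − 1) + 3(δ+1)/(2(δ+2)^n + δ − 1) ). Then the sequence (C_n) converges as n → ∞, and its limit equals ((δ+1)(δ+3)/(δ+4)) · Σ_{j=0}^{∞} 1/( (δ+4)^j (2(δ+2)^j + δ − 1) ). -/

import Mathlib

open Filter Finset Topology

/-- The average clustering coefficient of the weighted network converges. -/
theorem stmt7 (δ : ℝ) (hδ : 0 < δ) :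
    Filter.Tendsto
      (fun n : ℕ =>
        (δ + 3) / (6 * (δ + 4) ^ n + 3 * δ + 3) *
          ((∑ i ∈ Finset.Icc 1 n,
              6 * (δ + 4) ^ (i - 1) * (δ + 1) / (2 * (δ + 2) ^ (n - i) + δ - 1)) +
            3 * (δ + 1) / (2 * (δ + 2) ^ n + δ - 1)))
      Filter.atTop
      (nhds ((δ + 1) * (δ + 3) / (δ + 4) *
        ∑' j : ℕ, 1 / ((δ + 4) ^ j * (2 * (δ + 2) ^ j + δ - 1)))) := by
  have h4 : (1:ℝ) < δ + 4 := by linarith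
  have h4pos : (0:ℝ) < δ + 4 := by linarith
  have h2 : (1:ℝ) < δ + 2 := by linarith
  set g : ℕ → ℝ := fun j => 1 / ((δ + 4) ^ j * (2 * (δ + 2) ^ j + δ - 1)) with hg
  have hpow : ∀ j : ℕ, (0:ℝ) < (δ + 4) ^ j := fun j => pow_pos h4pos j
  have hD : ∀ j : ℕ, (0:ℝ) < 2 * (δ + 2) ^ j + δ - 1 := by
    intro j
    have h1 : (1:ℝ) ≤ (δ + 2) ^ j := one_le_pow₀ h2.le
    nlinarith
  have hgpos : ∀ j, 0 < g j := fun j =>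
    div_pos one_pos (mul_pos (hpow j) (hD j))
  -- summability
  have hsum : Summable g := by
    have hgeo : Summable (fun j : ℕ => (1/(δ+1)) * (1/(δ+4))^j) := by
      apply Summable.mul_left
      apply summable_geometric_of_lt_one (by positivity)
      rw [div_lt_one h4pos]; linarith
    apply Summable.of_nonneg_of_le (fun j => (hgpos j).le) _ hgeo
    intro j
    simp only [hg]
    rw [div_pow, one_pow, div_mul_div_comm, one_mul]
    apply one_div_le_one_div_of_le (by positivity)
    have h1 : (δ:ℝ) + 1 ≤ 2 * (δ + 2) ^ j + δ - 1 := by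
      have : (1:ℝ) ≤ (δ + 2) ^ j := one_le_pow₀ h2.le
      nlinarith
    calc (δ + 1) * (δ + 4) ^ j = (δ + 4) ^ j * (δ + 1) := by ring
      _ ≤ (δ + 4) ^ j * (2 * (δ + 2) ^ j + δ - 1) :=
        mul_le_mul_of_nonneg_left h1 (hpow j).le
  set S : ℝ := ∑' j : ℕ, g j with hS
  -- reindexing identity
  have key : ∀ n : ℕ,
      (∑ i ∈ Finset.Icc 1 n, 6 * (δ + 4) ^ (i - 1) * (δ + 1) / (2 * (δ + 2) ^ (n - i) + δ - 1))
        = (6 * (δ + 1) * (δ + 4) ^ n / (δ + 4)) * ∑ j ∈ Finset.range n, g j := by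
    intro n
    rw [Finset.mul_sum]
    refine Finset.sum_nbij' (fun i => n - i) (fun j => n - j) ?_ ?_ ?_ ?_ ?_
    · intro a ha
      simp only [Finset.mem_Icc] at ha
      simp only [Finset.mem_range]
      omega
    · intro a ha
      simp only [Finset.mem_range] at ha
      simp only [Finset.mem_Icc]
      omega
    · intro a ha; simp only [Finset.mem_Icc] at ha; omega
    · intro a ha; simp only [Finset.mem_range] at ha; omega
    · intro a ha
      simp only [Finset.mem_Icc] at ha
      simp only [hg]
      have hpoweq : (δ + 4) ^ (a - 1) * ((δ + 4) ^ (n - a) * (δ + 4)) = (δ + 4) ^ n := by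
        rw [← pow_succ, ← pow_add]
        congr 1
        omega
      have hd := hD (n - a)
      have hp1 := hpow (a - 1)
      have hp2 := hpow (n - a)
      rw [← hpoweq]
      field_simp
  -- limits
  have hx : Tendsto (fun n : ℕ => (δ + 4) ^ n) atTop atTop :=
    tendsto_pow_atTop_atTop_of_one_lt h4
  have hd1 : Tendsto (fun n : ℕ => 6 * (δ + 4) ^ n + 3 * δ + 3) atTop atTop := by
    apply tendsto_atTop_add_const_right
    apply tendsto_atTop_add_const_right
    exact hx.const_mul_atTop (by norm_num)
  have hd2 : Tendsto (fun n : ℕ => 2 * (δ + 2) ^ n + δ - 1) atTop atTop := by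
    apply tendsto_atTop_add_const_right
    apply tendsto_atTop_add_const_right
    exact (tendsto_pow_atTop_atTop_of_one_lt h2).const_mul_atTop (by norm_num)
  have hd1pos : ∀ n : ℕ, (0:ℝ) < 6 * (δ + 4) ^ n + 3 * δ + 3 := by
    intro n; have := hpow n; nlinarith
  have hmid : Tendsto (fun n : ℕ => 6 * (δ + 4) ^ n / (6 * (δ + 4) ^ n + 3 * δ + 3))
      atTop (𝓝 1) := by
    have heq : ∀ n : ℕ, 6 * (δ + 4) ^ n / (6 * (δ + 4) ^ n + 3 * δ + 3)
        = 1 - (3 * δ + 3) / (6 * (δ + 4) ^ n + 3 * δ + 3) := by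
      intro n
      have := hd1pos n
      field_simp
      ring
    simp only [heq]
    have h0 : Tendsto (fun n : ℕ => (3 * δ + 3) / (6 * (δ + 4) ^ n + 3 * δ + 3))
        atTop (𝓝 0) := Tendsto.div_atTop tendsto_const_nhds hd1
    simpa using tendsto_const_nhds.sub h0
  have hT : Tendsto (fun n : ℕ => ∑ j ∈ Finset.range n, g j) atTop (𝓝 S) :=
    hsum.hasSum.tendsto_sum_nat
  have hB : Tendsto (fun n : ℕ => (δ + 3) * (3 * (δ + 1)) /
      ((6 * (δ + 4) ^ n + 3 * δ + 3) * (2 * (δ + 2) ^ n + δ - 1))) atTop (𝓝 0) :=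
    Tendsto.div_atTop tendsto_const_nhds (hd1.atTop_mul_atTop₀ hd2)
  -- decompose the function
  have hfeq : ∀ n : ℕ,
      (δ + 3) / (6 * (δ + 4) ^ n + 3 * δ + 3) *
          ((∑ i ∈ Finset.Icc 1 n,
              6 * (δ + 4) ^ (i - 1) * (δ + 1) / (2 * (δ + 2) ^ (n - i) + δ - 1)) +
            3 * (δ + 1) / (2 * (δ + 2) ^ n + δ - 1))
      = ((δ + 1) * (δ + 3) / (δ + 4)) *
          (6 * (δ + 4) ^ n / (6 * (δ + 4) ^ n + 3 * δ + 3)) *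
          (∑ j ∈ Finset.range n, g j)
        + (δ + 3) * (3 * (δ + 1)) /
          ((6 * (δ + 4) ^ n + 3 * δ + 3) * (2 * (δ + 2) ^ n + δ - 1)) := by
    intro n
    rw [key n]
    have h1 := hd1pos n
    have h2' := hD n
    field_simp
  simp only [hfeq]
  have hA : Tendsto (fun n : ℕ =>
      ((δ + 1) * (δ + 3) / (δ + 4)) *
        (6 * (δ + 4) ^ n / (6 * (δ + 4) ^ n + 3 * δ + 3)) *
        (∑ j ∈ Finset.range n, g j)) atTop (𝓝 ((δ + 1) * (δ + 3) / (δ + 4) * S)) := by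
    have := ((tendsto_const_nhds (x := (δ + 1) * (δ + 3) / (δ + 4))
      (f := atTop (α := ℕ))).mul hmid).mul hT
    simpa using this
  simpa using hA.add hB
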